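/- arXiv:1912.02103 — 2 statements merged into one kernel-verified Lean document; each statement's English description precedes it below -/
import Mathlib

section
/- Let X be a metric space. If coasdim(X) ≤ γ for some ordinal number γ, then trasdim(X) ≤ γ. -/
open Metric Set Filter ENNReal

noncomputable section

namespace AsympPaper

/-- The distance between two subsets of a (pseudo)metric space,
`d(A,B) = inf {dist a b : a ∈ A, b ∈ B}`, valued in `ℝ≥0∞` (it is `∞` if `A` or `B` is empty). -/
def setEDist {X : Type*} [PseudoMetricSpace X] (A B : Set X) : ℝ≥0∞ :=
  ⨅ a ∈ A, ⨅ b ∈ B, edist a b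

/-- A family `𝒰` of subsets of a metric space is `r`-disjoint if `d(U,V) > r`
for all distinct `U, V ∈ 𝒰`. -/
def RDisjoint {X : Type*} [PseudoMetricSpace X] (r : ℝ) (𝒰 : Set (Set X)) : Prop :=
  ∀ U ∈ 𝒰, ∀ V ∈ 𝒰, U ≠ V → ENNReal.ofReal r < setEDist U V

/-- A family `𝒰` of subsets of a metric space is uniformly bounded if
`sup {diam U : U ∈ 𝒰} < ∞`. -/
def UniformlyBdd {X : Type*} [PseudoMetricSpace X] (𝒰 : Set (Set X)) : Prop :=
  ∃ R : ℝ, ∀ U ∈ 𝒰, ∀ x ∈ U, ∀ y ∈ U, dist x y ≤ R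

/-- `Msub M σ` is the set `M^σ = {τ ∈ Fin ℕ : τ ∪ σ ∈ M and τ ∩ σ = ∅}`,
where `Fin ℕ` is the collection of finite nonempty subsets of `ℕ`. -/
def Msub (M : Set (Finset ℕ)) (σ : Finset ℕ) : Set (Finset ℕ) :=
  {τ | τ.Nonempty ∧ τ ∪ σ ∈ M ∧ τ ∩ σ = ∅}

/-- `OrdLE M α` is the relation `Ord M ≤ α`:  `Ord ∅ = 0` (so `Ord ∅ ≤ α` always), and for
`M ≠ ∅`, `Ord M ≤ α` iff `Ord M^a < α` for every `a ∈ ℕ`. -/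
def OrdLE (M : Set (Finset ℕ)) (α : Ordinal.{0}) : Prop :=
  M = ∅ ∨ ∀ a : ℕ, ∃ β : {β : Ordinal.{0} // β < α}, OrdLE (Msub M {a}) β.1
termination_by α
decreasing_by exact β.2

/-- `Ord M < α`. -/
def OrdLT (M : Set (Finset ℕ)) (α : Ordinal.{0}) : Prop := ∃ β < α, OrdLE M β

/-- `Ord M = α`. -/
def OrdEq (M : Set (Finset ℕ)) (α : Ordinal.{0}) : Prop := OrdLE M α ∧ ¬ OrdLT M α

/-- `A(X)`: the set of finite nonempty `σ ⊆ ℕ` such that there are *no* uniformly bounded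
families `𝒰 i` for `i ∈ σ`, each `𝒰 i` being `i`-disjoint, with `⋃_{i ∈ σ} 𝒰 i` covering `X`. -/
def AX (X : Type*) [PseudoMetricSpace X] : Set (Finset ℕ) :=
  {σ | σ.Nonempty ∧ ¬ ∃ 𝒰 : ℕ → Set (Set X),
      (∀ i ∈ σ, UniformlyBdd (𝒰 i) ∧ RDisjoint (i : ℝ) (𝒰 i)) ∧
      ∀ x : X, ∃ i ∈ σ, ∃ U ∈ 𝒰 i, x ∈ U}

/-- `trasdim(X) ≤ γ`, i.e. `Ord A(X) ≤ γ`. -/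
def TrasdimLE (X : Type*) [PseudoMetricSpace X] (γ : Ordinal.{0}) : Prop := OrdLE (AX X) γ

/-- `trasdim(X) = γ`, i.e. `Ord A(X) = γ`. -/
def TrasdimEq (X : Type*) [PseudoMetricSpace X] (γ : Ordinal.{0}) : Prop := OrdEq (AX X) γ

/-- Auxiliary for `coasdim`: `CoasdimLEAux A lam n` says `coasdim(A) ≤ lam + n` where `lam` is
a limit ordinal or `0` and `n ∈ ℕ`: for every `r > 0` there are `r`-disjoint uniformly bounded
families `𝒰 0, …, 𝒰 n` of subsets of `A` such that `coasdim(A \ ⋃ i, ⋃₀ 𝒰 i) < lam`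
(where `coasdim = -1` exactly for `∅`). -/
def CoasdimLEAux {X : Type*} [PseudoMetricSpace X] (A : Set X) (lam : Ordinal.{0}) (n : ℕ) :
    Prop :=
  ∀ r : ℝ, 0 < r → ∃ 𝒰 : Fin (n + 1) → Set (Set X),
    (∀ i, (∀ U ∈ 𝒰 i, U ⊆ A) ∧ UniformlyBdd (𝒰 i) ∧ RDisjoint r (𝒰 i)) ∧
    ((A \ ⋃ i, ⋃₀ 𝒰 i) = ∅ ∨
      ∃ q : {q : Ordinal.{0} × ℕ // q.1 + q.2 < lam ∧ (q.1 = 0 ∨ Order.IsSuccLimit q.1)},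
        CoasdimLEAux (A \ ⋃ i, ⋃₀ 𝒰 i) q.1.1 q.1.2)
termination_by lam
decreasing_by exact lt_of_le_of_lt (le_self_add) q.2.1

/-- `coasdim(A) ≤ γ` for a subset `A` of an ambient metric space (with the induced metric). -/
def CoasdimLE {X : Type*} [PseudoMetricSpace X] (A : Set X) (γ : Ordinal.{0}) : Prop :=
  ∃ lam : Ordinal.{0}, ∃ n : ℕ, (lam = 0 ∨ Order.IsSuccLimit lam) ∧ γ = lam + n ∧ CoasdimLEAux A lam n

/-- `coasdim(A) = γ`. -/
def CoasdimEq {X : Type*} [PseudoMetricSpace X] (A : Set X) (γ : Ordinal.{0}) : Prop :=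
  CoasdimLE A γ ∧ ∀ β < γ, ¬ CoasdimLE A β

/-- `1 + 2 + ⋯ + (i-1) = i(i-1)/2`, as a real number. -/
def triHalf (i : ℕ) : ℝ := ((i * (i - 1)) / 2 : ℕ)

/-- The asymptotic union `as⊔_{i=1}^∞ Z_i` of a sequence of subspaces `Z_i = S i` of an ambient
metric space `Z` (indices with `S i = ∅` are vacuous; in particular take `S 0 = ∅` to start
the union at `i = 1`). A point is a pair `(i, x)` with `x ∈ S i`. -/
structure AsUnion {Z : Type*} (S : ℕ → Set Z) where
  idx : ℕ
  pt : S idx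

/-- The metric of the asymptotic union: `d((l,x),(k,y)) = d_Z(x,y) + c` where, for `l ≤ k`,
`c = 0` if `l = k` and `c = l + (l+1) + ⋯ + (k-1)` if `l < k`. -/
instance AsUnion.instPseudoMetricSpace {Z : Type*} [PseudoMetricSpace Z] (S : ℕ → Set Z) :
    PseudoMetricSpace (AsUnion S) where
  dist p q := dist (p.pt : Z) (q.pt : Z) + |triHalf p.idx - triHalf q.idx|
  dist_self p := by simp
  dist_comm p q := by
    show dist (p.pt : Z) (q.pt : Z) + |triHalf p.idx - triHalf q.idx|
      = dist (q.pt : Z) (p.pt : Z) + |triHalf q.idx - triHalf p.idx|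
    rw [dist_comm, abs_sub_comm]
  dist_triangle p q r := by
    show dist (p.pt : Z) (r.pt : Z) + |triHalf p.idx - triHalf r.idx|
      ≤ (dist (p.pt : Z) (q.pt : Z) + |triHalf p.idx - triHalf q.idx|)
        + (dist (q.pt : Z) (r.pt : Z) + |triHalf q.idx - triHalf r.idx|)
    have h1 := dist_triangle (p.pt : Z) (q.pt : Z) (r.pt : Z)
    have h2 := abs_sub_le (triHalf p.idx) (triHalf q.idx) (triHalf r.idx)
    linarith

/-- The ambient space `⊕ ℝ` of sequences, realized inside the bounded
functions `ℕ →ᵇ ℝ` with the sup-metric. -/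
abbrev Amb : Type := BoundedContinuousFunction ℕ ℝ

/-- `t ∈ 2^n ℤ`. -/
def IsMultiple (n : ℕ) (t : ℝ) : Prop := ∃ m : ℤ, t = (m : ℝ) * 2 ^ n

/-- `X_{ω+k}^{(i,n)} = {x ∈ ℝ^i : #{j : x_j ∉ 2^n ℤ} ≤ k}`, realized as the subset of `⊕ ℝ`
of sequences supported on the first `i` coordinates. -/
def XSet (k i n : ℕ) : Set Amb :=
  {f | (∀ j, i ≤ j → f j = 0) ∧ ({j | j < i ∧ ¬ IsMultiple n (f j)}).ncard ≤ k}

/-- `X_{ω+k} = as⊔_{i=1}^∞ X_{ω+k}^{(i)}` where `X_{ω+k}^{(i)} = X_{ω+k}^{(i,i)}`. -/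
def XOmegaPlus (k : ℕ) : Type := AsUnion (fun i => if i = 0 then (∅ : Set Amb) else XSet k i i)

instance (k : ℕ) : PseudoMetricSpace (XOmegaPlus k) :=
  AsUnion.instPseudoMetricSpace _

/-- `as⊔_{i=n}^∞ X_{ω+k}^{(i,n)}`. -/
def XTail (k n : ℕ) : Type := AsUnion (fun i => if i < n then (∅ : Set Amb) else XSet k i n)

instance (k n : ℕ) : PseudoMetricSpace (XTail k n) :=
  AsUnion.instPseudoMetricSpace _

/-- `Y_{ω+k}^{(i)} = {x ∈ (2^k ℤ)^i : #{j : x_j ∉ 2^i ℤ} ≤ k}` inside `⊕ ℝ`. -/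
def YSet (k i : ℕ) : Set Amb :=
  {f | (∀ j, i ≤ j → f j = 0) ∧ (∀ j, j < i → IsMultiple k (f j)) ∧
    ({j | j < i ∧ ¬ IsMultiple i (f j)}).ncard ≤ k}

/-- `Y_{ω+k} = as⊔_{i=1}^∞ Y_{ω+k}^{(i)}`. -/
def YOmegaPlus (k : ℕ) : Type := AsUnion (fun i => if i = 0 then (∅ : Set Amb) else YSet k i)

instance (k : ℕ) : PseudoMetricSpace (YOmegaPlus k) :=
  AsUnion.instPseudoMetricSpace _

/-- `ℝ^i` inside `⊕ ℝ`. -/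
def RSet (i : ℕ) : Set Amb := {f | ∀ j, i ≤ j → f j = 0}

/-- The ambient space `as⊔_{i=1}^∞ ℝ^i`. -/
def AsR : Type := AsUnion (fun i => if i = 0 then (∅ : Set Amb) else RSet i)

instance : PseudoMetricSpace AsR := AsUnion.instPseudoMetricSpace _

/-- `Y_{ω+k}` viewed as a subspace of `as⊔_{i=1}^∞ ℝ^i`. -/
def YSub (k : ℕ) : Set AsR := {p | (p.pt : Amb) ∈ YSet k p.idx}

/-- `Y_{2ω} = as⊔_{k=1}^∞ Y_{ω+k}`, the `Y_{ω+k}` being subspaces of `as⊔_{i=1}^∞ ℝ^i`. -/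
def Y2Omega : Type := AsUnion (fun k => if k = 0 then (∅ : Set AsR) else YSub k)

instance : PseudoMetricSpace Y2Omega := AsUnion.instPseudoMetricSpace _

/-- A family covers the space. -/
def Covers {X : Type*} (𝒰 : Set (Set X)) : Prop := ∀ x : X, ∃ U ∈ 𝒰, x ∈ U

/-- The Lebesgue number `L(𝒰) = inf_{x ∈ X} sup {r > 0 : ∃ U ∈ 𝒰, B(x,r) ⊆ U}`,
valued in `ℝ≥0∞`. -/
def lebesgueNum {X : Type*} [PseudoMetricSpace X] (𝒰 : Set (Set X)) : ℝ≥0∞ :=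
  ⨅ x : X, sSup {e : ℝ≥0∞ | ∃ r : ℝ, 0 < r ∧ e = ENNReal.ofReal r ∧ ∃ U ∈ 𝒰, Metric.ball x r ⊆ U}

/-- The multiplicity `m(𝒰)`: the maximal number of members of `𝒰` with nonempty
intersection, valued in `ℕ∞`. -/
def covMult {X : Type*} (𝒰 : Set (Set X)) : ℕ∞ :=
  sSup {m : ℕ∞ | ∃ t : Finset (Set X), ↑t ⊆ 𝒰 ∧ (⋂₀ (t : Set (Set X))).Nonempty ∧ m = t.card}

/-- The asymptotic dimension function
`ad_X(λ) = min {m(𝒰) : 𝒰 a uniformly bounded cover of X with L(𝒰) ≥ λ} - 1`. -/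
def adim (X : Type*) [PseudoMetricSpace X] (lam : ℝ) : ℕ∞ :=
  sInf {m : ℕ∞ | ∃ 𝒰 : Set (Set X), UniformlyBdd 𝒰 ∧ Covers 𝒰 ∧
    ENNReal.ofReal lam ≤ lebesgueNum 𝒰 ∧ m = covMult 𝒰} - 1

/-- `(2^k ℤ)^n` as a subset of `ℝ^n` (the latter carrying the sup-metric). -/
def grid (k n : ℕ) : Set (Fin n → ℝ) := {x | ∀ j, IsMultiple k (x j)}

/-- `g̃(r) = max {k ∈ ℕ : ad_{(2^k ℤ)^{g(r)}}(r) = g(r)}`. -/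
def gtilde (g : ℝ → ℕ) (r : ℝ) : ℕ :=
  sSup {k : ℕ | adim (grid k (g r)) r = (g r : ℕ∞)}

/-- `(2^k ℤ)^n` realized inside `⊕ ℝ`: sequences supported on the first `n` coordinates,
with those coordinates in `2^k ℤ`. -/
def gridSet (k n : ℕ) : Set Amb :=
  {f | (∀ j, n ≤ j → f j = 0) ∧ ∀ j, j < n → IsMultiple k (f j)}

/-- `X_ω(g) = as⊔_{i=1}^∞ (2^{g̃(i)} ℤ)^{g(i)}`. -/
def XOmegaG (g : ℝ → ℕ) : Type :=
  AsUnion (fun i => if i = 0 then (∅ : Set Amb) else gridSet (gtilde g (i : ℝ)) (g (i : ℝ)))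

instance (g : ℝ → ℕ) : PseudoMetricSpace (XOmegaG g) := AsUnion.instPseudoMetricSpace _

/-- `f : X → Y` is a coarse equivalence: a coarse embedding with coarsely dense image. -/
def IsCoarseEquiv {X Y : Type*} [PseudoMetricSpace X] [PseudoMetricSpace Y] (f : X → Y) : Prop :=
  (∃ p₁ p₂ : ℝ → ℝ, Monotone p₁ ∧ Monotone p₂ ∧
      Tendsto p₁ atTop atTop ∧ Tendsto p₂ atTop atTop ∧
      ∀ x₁ x₂ : X, p₁ (dist x₁ x₂) ≤ dist (f x₁) (f x₂) ∧ dist (f x₁) (f x₂) ≤ p₂ (dist x₁ x₂)) ∧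
  ∃ R : ℝ, 0 < R ∧ ∀ y : Y, ∃ x : X, dist y (f x) < R

/-- A family `𝒳` (of subsets of an ambient space) is `r`-decomposable over a family `𝒴`:
each `A ∈ 𝒳` splits as `A = A₀ ∪ A₁`, each `A_i` being an `r`-disjoint union of members
of a subfamily of `𝒴`. -/
def RDecomp {X : Type*} [PseudoMetricSpace X] (r : ℝ) (F G : Set (Set X)) : Prop :=
  ∀ A ∈ F, ∃ A₀ A₁ : Set X, A = A₀ ∪ A₁ ∧
    (∃ P ⊆ G, A₀ = ⋃₀ P ∧ RDisjoint r P) ∧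
    (∃ P ⊆ G, A₁ = ⋃₀ P ∧ RDisjoint r P)

/-- `F ∈ D_α`, finite decomposition complexity: `D_0` consists of the bounded
families, and for `α > 0`, `F ∈ D_α` iff for every `r > 0` there are `β < α` and
`G ∈ D_β` such that `F` is `r`-decomposable over `G`. -/
def InD {X : Type*} [PseudoMetricSpace X] (F : Set (Set X)) (α : Ordinal.{0}) : Prop :=
  if α = 0 then ∃ R : ℝ, ∀ A ∈ F, ∀ x ∈ A, ∀ y ∈ A, dist x y ≤ R
  else ∀ r : ℝ, 0 < r → ∃ β : {β : Ordinal.{0} // β < α},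
    ∃ G : Set (Set X), InD G β.1 ∧ RDecomp r F G
termination_by α
decreasing_by exact β.2

end AsympPaper


open AsympPaper

section Statement2Aux

universe u

open AsympPaper

/-! ### Combinatorial lemmas about `OrdLE` and `Msub` -/

lemma ordLE_empty (α : Ordinal.{0}) : OrdLE ∅ α := by
  unfold OrdLE; left; rfl

lemma ordLE_of_eq_empty {M : Set (Finset ℕ)} (h : M = ∅) (α : Ordinal.{0}) : OrdLE M α :=
  h ▸ ordLE_empty α

lemma msub_mono {M N : Set (Finset ℕ)} (h : M ⊆ N) (σ : Finset ℕ) :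
    Msub M σ ⊆ Msub N σ := fun _τ ht => ⟨ht.1, h ht.2.1, ht.2.2⟩

lemma ordLE_mono : ∀ (α : Ordinal.{0}) {M N : Set (Finset ℕ)}, M ⊆ N → OrdLE N α → OrdLE M α := by
  intro α
  induction α using Ordinal.induction with
  | h α IH =>
    intro M N hMN hN
    rw [OrdLE] at hN ⊢
    rcases hN with h | h
    · left; exact Set.subset_empty_iff.mp (h ▸ hMN)
    · right; intro a
      obtain ⟨β, hβ⟩ := h a
      exact ⟨β, IH β.1 β.2 (msub_mono hMN _) hβ⟩

lemma ordLE_of_card_le : ∀ (n : ℕ) (M : Set (Finset ℕ)),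
    (∀ τ ∈ M, τ.Nonempty ∧ τ.card ≤ n) → OrdLE M (n : Ordinal.{0}) := by
  intro n
  induction n with
  | zero =>
    intro M h
    refine ordLE_of_eq_empty ?_ _
    ext τ
    simp only [Set.mem_empty_iff_false, iff_false]
    intro hτ
    obtain ⟨h1, h2⟩ := h τ hτ
    have := Finset.card_pos.mpr h1
    omega
  | succ n IH =>
    intro M h
    rw [OrdLE]; right; intro a
    refine ⟨⟨(n : Ordinal), by exact_mod_cast Nat.lt_succ_self n⟩, ?_⟩
    apply IH
    rintro τ ⟨hne, hmem, hdisj⟩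
    refine ⟨hne, ?_⟩
    have hcard := (h _ hmem).2
    have ha : a ∉ τ := by
      intro ha
      have : a ∈ τ ∩ ({a} : Finset ℕ) := by simp [ha]
      rw [hdisj] at this
      simp at this
    rw [Finset.card_union_of_disjoint (by simpa using ha)] at hcard
    simpa using hcard

lemma msub_msub {M : Set (Finset ℕ)} {a : ℕ} {σ : Finset ℕ} (ha : a ∉ σ) :
    Msub (Msub M {a}) σ = Msub M (insert a σ) := by
  have e1 : ∀ τ : Finset ℕ, τ ∪ insert a σ = (τ ∪ σ) ∪ {a} := by
    intro τ; ext x; simp [Finset.mem_insert, Finset.mem_union]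
  ext τ
  simp only [Msub, Set.mem_setOf_eq]
  constructor
  · rintro ⟨h1, ⟨h2, h3, h4⟩, h5⟩
    have haτ : a ∉ τ := by
      intro haτ
      have : a ∈ (τ ∪ σ) ∩ ({a} : Finset ℕ) := by simp [haτ]
      rw [h4] at this; simp at this
    refine ⟨h1, by rw [e1]; exact h3, ?_⟩
    ext x
    simp only [Finset.mem_inter, Finset.mem_insert, Finset.notMem_empty, iff_false, not_and]
    rintro hx (rfl | hxσ)
    · exact haτ hx
    · have : x ∈ τ ∩ σ := Finset.mem_inter.mpr ⟨hx, hxσ⟩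
      rw [h5] at this; simp at this
  · rintro ⟨h1, h2, h3⟩
    have haτ : a ∉ τ := by
      intro haτ
      have : a ∈ τ ∩ insert a σ := by simp [haτ]
      rw [h3] at this; simp at this
    have hτσ : τ ∩ σ = ∅ := by
      ext x
      simp only [Finset.mem_inter, Finset.notMem_empty, iff_false, not_and]
      intro hx hxσ
      have : x ∈ τ ∩ insert a σ := by simp [hx, hxσ]
      rw [h3] at this; simp at this
    refine ⟨h1, ⟨?_, by rw [← e1]; exact h2, ?_⟩, hτσ⟩
    · obtain ⟨x, hx⟩ := h1; exact ⟨x, Finset.mem_union_left _ hx⟩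
    · ext x
      simp only [Finset.mem_inter, Finset.mem_union, Finset.mem_singleton,
        Finset.notMem_empty, iff_false, not_and]
      rintro (hx | hx) rfl
      · exact haτ hx
      · exact ha hx

lemma msub_msub_self {M : Set (Finset ℕ)} {a : ℕ} {σ : Finset ℕ} (ha : a ∈ σ) :
    Msub (Msub M {a}) σ = ∅ := by
  ext τ
  simp only [Msub, Set.mem_setOf_eq, Set.mem_empty_iff_false, iff_false]
  rintro ⟨h1, ⟨h2, h3, h4⟩, h5⟩
  have : a ∈ (τ ∪ σ) ∩ ({a} : Finset ℕ) := by simp [ha]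
  rw [h4] at this; simp at this

lemma gen_zero (n : ℕ) (M : Set (Finset ℕ)) (hM : ∀ τ ∈ M, τ.Nonempty)
    (H : ∀ σ : Finset ℕ, σ.Nonempty → σ.card = n + 1 → Msub M σ = ∅ ∧ σ ∉ M) :
    OrdLE M (n : Ordinal.{0}) := by
  apply ordLE_of_card_le
  intro τ hτ
  refine ⟨hM τ hτ, ?_⟩
  by_contra hc
  push_neg at hc
  obtain ⟨σ, hσsub, hσcard⟩ := Finset.exists_subset_card_eq (show n + 1 ≤ τ.card by omega)
  have hσne : σ.Nonempty := Finset.card_pos.mp (by omega)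
  obtain ⟨hE, hnm⟩ := H σ hσne hσcard
  by_cases hts : τ = σ
  · exact hnm (hts ▸ hτ)
  · have hne : (τ \ σ).Nonempty := by
      rw [Finset.sdiff_nonempty]
      intro hsub
      exact hts (Finset.Subset.antisymm hsub hσsub)
    have hmem : τ \ σ ∈ Msub M σ := by
      refine ⟨hne, by rwa [Finset.sdiff_union_of_subset hσsub], ?_⟩
      ext x
      simp only [Finset.mem_inter, Finset.mem_sdiff, Finset.notMem_empty, iff_false, not_and]
      tauto
    rw [hE] at hmem
    exact hmem

lemma gen_limit (lam : Ordinal.{0}) (hlam : Order.IsSuccLimit lam) :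
    ∀ (n : ℕ) (M : Set (Finset ℕ)),
    (∀ σ : Finset ℕ, σ.Nonempty → σ.card = n + 1 → ∃ β < lam, OrdLE (Msub M σ) β) →
    OrdLE M (lam + n) := by
  intro n
  induction n with
  | zero =>
    intro M H
    rw [OrdLE]; right; intro a
    obtain ⟨β, hβ, hO⟩ := H {a} ⟨a, by simp⟩ (by simp)
    exact ⟨⟨β, by simpa using hβ⟩, hO⟩
  | succ n IH =>
    intro M H
    rw [OrdLE]; right; intro a
    refine ⟨⟨lam + n, ?_⟩, ?_⟩
    · have : (n : Ordinal.{0}) < ((n + 1 : ℕ) : Ordinal.{0}) := by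
        exact_mod_cast Nat.lt_succ_self n
      exact (add_lt_add_iff_left lam).mpr this
    · apply IH
      intro σ hσne hσcard
      by_cases ha : a ∈ σ
      · exact ⟨0, hlam.pos, ordLE_of_eq_empty (msub_msub_self ha) 0⟩
      · rw [msub_msub ha]
        apply H (insert a σ) ⟨a, Finset.mem_insert_self a σ⟩
        rw [Finset.card_insert_of_notMem ha, hσcard]

end Statement2Aux

section Statement2Metric

universe u

open AsympPaper

variable {X : Type u} [PseudoMetricSpace X]

lemma rDisjoint_mono {r s : ℝ} (h : r ≤ s) {𝒰 : Set (Set X)} (hs : RDisjoint s 𝒰) :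
    RDisjoint r 𝒰 := fun U hU V hV hne =>
  lt_of_le_of_lt (ENNReal.ofReal_le_ofReal h) (hs U hU V hV hne)

lemma uniformlyBdd_empty : UniformlyBdd (∅ : Set (Set X)) := ⟨0, by simp⟩

lemma rDisjoint_empty (r : ℝ) : RDisjoint r (∅ : Set (Set X)) := by
  intro U hU; simp at hU

lemma setEDist_image_val {Y : Set X} (U V : Set ↥Y) :
    setEDist (Subtype.val '' U) (Subtype.val '' V) = setEDist U V := by
  refine le_antisymm ?_ ?_
  · refine le_iInf₂ fun a ha => le_iInf₂ fun b hb => ?_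
    rw [Subtype.edist_eq]
    exact iInf₂_le_of_le ((a : X)) (Set.mem_image_of_mem _ ha)
      (iInf₂_le ((b : X)) (Set.mem_image_of_mem _ hb))
  · refine le_iInf₂ fun a ha => le_iInf₂ fun b hb => ?_
    obtain ⟨a', ha', rfl⟩ := ha
    obtain ⟨b', hb', rfl⟩ := hb
    rw [← Subtype.edist_eq]
    exact iInf₂_le_of_le a' ha' (iInf₂_le b' hb')

lemma le_setEDist_preimage {Y : Set X} (U V : Set X) :
    setEDist U V ≤ setEDist (Subtype.val ⁻¹' U : Set ↥Y) (Subtype.val ⁻¹' V) := by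
  unfold setEDist
  refine le_iInf₂ fun a ha => le_iInf₂ fun b hb => ?_
  rw [Subtype.edist_eq]
  exact iInf₂_le_of_le ((a : X)) ha (iInf₂_le ((b : X)) hb)

lemma uniformlyBdd_image_val {Y : Set X} {𝒰 : Set (Set ↥Y)} (h : UniformlyBdd 𝒰) :
    UniformlyBdd ((fun U => Subtype.val '' U) '' 𝒰) := by
  obtain ⟨R, hR⟩ := h
  refine ⟨R, ?_⟩
  rintro _ ⟨U, hU, rfl⟩ x ⟨x', hx', rfl⟩ y ⟨y', hy', rfl⟩
  have := hR U hU x' hx' y' hy'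
  rwa [Subtype.dist_eq] at this

lemma rDisjoint_image_val {Y : Set X} {r : ℝ} {𝒰 : Set (Set ↥Y)} (h : RDisjoint r 𝒰) :
    RDisjoint r ((fun U => Subtype.val '' U) '' 𝒰) := by
  rintro _ ⟨U, hU, rfl⟩ _ ⟨V, hV, rfl⟩ hne
  rw [setEDist_image_val]
  exact h U hU V hV (fun e => hne (by rw [e]))

lemma uniformlyBdd_preimage_val {Y : Set X} {𝒰 : Set (Set X)} (h : UniformlyBdd 𝒰) :
    UniformlyBdd ((fun U => (Subtype.val ⁻¹' U : Set ↥Y)) '' 𝒰) := by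
  obtain ⟨R, hR⟩ := h
  refine ⟨R, ?_⟩
  rintro _ ⟨U, hU, rfl⟩ x hx y hy
  rw [Subtype.dist_eq]
  exact hR U hU _ hx _ hy

lemma rDisjoint_preimage_val {Y : Set X} {r : ℝ} {𝒰 : Set (Set X)} (h : RDisjoint r 𝒰) :
    RDisjoint r ((fun U => (Subtype.val ⁻¹' U : Set ↥Y)) '' 𝒰) := by
  rintro _ ⟨U, hU, rfl⟩ _ ⟨V, hV, rfl⟩ hne
  exact lt_of_lt_of_le (h U hU V hV (fun e => hne (by rw [e]))) (le_setEDist_preimage U V)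

lemma coasdimLEAux_subtype (Y : Set X) :
    ∀ (lam : Ordinal.{0}) (n : ℕ) (A : Set X), A ⊆ Y → CoasdimLEAux A lam n →
      CoasdimLEAux (Subtype.val ⁻¹' A : Set ↥Y) lam n := by
  intro lam
  induction lam using Ordinal.induction with
  | h lam IH =>
    intro n A hAY hA
    rw [CoasdimLEAux] at hA ⊢
    intro r hr
    obtain ⟨𝒰, h𝒰, hrem⟩ := hA r hr
    refine ⟨fun i => (fun U => (Subtype.val ⁻¹' U : Set ↥Y)) '' 𝒰 i, ?_, ?_⟩
    · intro i
      refine ⟨?_, uniformlyBdd_preimage_val (h𝒰 i).2.1, rDisjoint_preimage_val (h𝒰 i).2.2⟩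
      rintro _ ⟨U, hU, rfl⟩
      exact Set.preimage_mono ((h𝒰 i).1 U hU)
    · have hset :
          ((Subtype.val ⁻¹' A : Set ↥Y) \
            ⋃ i, ⋃₀ ((fun U => (Subtype.val ⁻¹' U : Set ↥Y)) '' 𝒰 i))
          = Subtype.val ⁻¹' (A \ ⋃ i, ⋃₀ 𝒰 i) := by
        ext x
        simp only [Set.mem_diff, Set.mem_preimage, Set.mem_iUnion, Set.mem_sUnion,
          Set.mem_image]
        constructor
        · rintro ⟨hx, hnot⟩
          refine ⟨hx, ?_⟩
          rintro ⟨i, U, hU, hxU⟩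
          exact hnot ⟨i, _, ⟨U, hU, rfl⟩, hxU⟩
        · rintro ⟨hx, hnot⟩
          refine ⟨hx, ?_⟩
          rintro ⟨i, _, ⟨U, hU, rfl⟩, hxU⟩
          exact hnot ⟨i, U, hU, hxU⟩
      rcases hrem with h | ⟨q, hq⟩
      · left; rw [hset, h]; simp
      · right
        refine ⟨q, ?_⟩
        rw [hset]
        exact IH q.1.1 (lt_of_le_of_lt le_self_add q.2.1) q.1.2 _
          (fun x hx => hAY hx.1) hq

end Statement2Metric

section Statement2Main

universe u

open AsympPaper

lemma statement_2_main : ∀ (γ : Ordinal.{0}) (X : Type u) [MetricSpace X],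
    CoasdimLE (Set.univ : Set X) γ → OrdLE (AX X) γ := by
  intro γ
  induction γ using Ordinal.induction with
  | h γ IH =>
    intro X _ h
    obtain ⟨lam, n, hlim, rfl, haux⟩ := h
    have key : ∀ σ : Finset ℕ, σ.Nonempty → σ.card = n + 1 →
        (∃ β < lam, OrdLE (Msub (AX X) σ) β) ∨
          (lam = 0 ∧ Msub (AX X) σ = ∅ ∧ σ ∉ AX X) := by
      intro σ hσne hσcard
      set r : ℝ := ((σ.max' hσne : ℕ) : ℝ) + 1 with hrdef
      have hrpos : 0 < r := by positivity
      rw [CoasdimLEAux] at haux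
      obtain ⟨𝒰, h𝒰, hrem⟩ := haux r hrpos
      set Y : Set X := Set.univ \ ⋃ i, ⋃₀ 𝒰 i with hYdef
      set e : Fin (n + 1) ↪o ℕ := σ.orderEmbOfFin hσcard with hedef
      set 𝒱 : ℕ → Set (Set X) :=
        fun i => ⋃ j : Fin (n + 1), if e j = i then 𝒰 j else (∅ : Set (Set X)) with h𝒱def
      have h𝒱e : ∀ j, 𝒱 (e j) = 𝒰 j := by
        intro j
        ext U
        simp only [h𝒱def, Set.mem_iUnion]
        constructor
        · rintro ⟨j', hj'⟩
          by_cases hjj : e j' = e j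
          · rw [if_pos hjj] at hj'
            rwa [e.injective hjj] at hj'
          · rw [if_neg hjj] at hj'
            exact absurd hj' (Set.notMem_empty U)
        · intro hU
          exact ⟨j, by simp [hU]⟩
      have h𝒱empty : ∀ i, i ∉ σ → 𝒱 i = ∅ := by
        intro i hi
        ext U
        simp only [h𝒱def, Set.mem_iUnion, Set.mem_empty_iff_false, iff_false, not_exists]
        intro j
        have : e j ≠ i := fun hji => hi (hji ▸ σ.orderEmbOfFin_mem hσcard j)
        rw [if_neg this]
        exact Set.notMem_empty U
      have h𝒱props : ∀ i ∈ σ, UniformlyBdd (𝒱 i) ∧ RDisjoint (i : ℝ) (𝒱 i) := by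
        intro i hi
        have : i ∈ Set.range e := by rw [hedef, Finset.range_orderEmbOfFin]; exact_mod_cast hi
        obtain ⟨j, rfl⟩ := this
        rw [h𝒱e]
        refine ⟨(h𝒰 j).2.1, rDisjoint_mono ?_ (h𝒰 j).2.2⟩
        have hle : (e j : ℕ) ≤ σ.max' hσne := σ.le_max' _ hi
        rw [hrdef]
        have : ((e j : ℕ) : ℝ) ≤ ((σ.max' hσne : ℕ) : ℝ) := by exact_mod_cast hle
        linarith
      have h𝒱cover : ∀ x : X, x ∉ Y → ∃ i ∈ σ, ∃ U ∈ 𝒱 i, x ∈ U := by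
        intro x hx
        have : x ∈ ⋃ i, ⋃₀ 𝒰 i := by
          by_contra hc
          exact hx ⟨Set.mem_univ x, hc⟩
        obtain ⟨_, ⟨j, rfl⟩, U, hU, hxU⟩ := this
        exact ⟨e j, σ.orderEmbOfFin_mem hσcard j, U, by rw [h𝒱e]; exact hU, hxU⟩
      -- combining a cover of Y (in the subspace) with 𝒱 gives a cover of X
      have hnotAX : ∀ τ : Finset ℕ, τ ∩ σ = ∅ →
          (∃ 𝒲 : ℕ → Set (Set ↥Y),
            (∀ i ∈ τ, UniformlyBdd (𝒲 i) ∧ RDisjoint (i : ℝ) (𝒲 i)) ∧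
            ∀ y : ↥Y, ∃ i ∈ τ, ∃ U ∈ 𝒲 i, y ∈ U) → (τ ∪ σ) ∉ AX X := by
        rintro τ hdisj ⟨𝒲, h𝒲, hWcov⟩ hmem
        refine hmem.2 ⟨fun i => if i ∈ σ then 𝒱 i else (fun U => Subtype.val '' U) '' 𝒲 i,
          ?_, ?_⟩
        · intro i hi
          by_cases hiσ : i ∈ σ
          · simpa only [if_pos hiσ] using h𝒱props i hiσ
          · have hiτ : i ∈ τ := by
              rcases Finset.mem_union.mp hi with h' | h'
              · exact h'
              · exact absurd h' hiσ
            simp only [if_neg hiσ]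
            exact ⟨uniformlyBdd_image_val (h𝒲 i hiτ).1, rDisjoint_image_val (h𝒲 i hiτ).2⟩
        · intro x
          by_cases hxY : x ∈ Y
          · obtain ⟨i, hiτ, U, hU, hxU⟩ := hWcov ⟨x, hxY⟩
            have hiσ : i ∉ σ := by
              intro hiσ
              have : i ∈ τ ∩ σ := Finset.mem_inter.mpr ⟨hiτ, hiσ⟩
              rw [hdisj] at this
              simp at this
            refine ⟨i, Finset.mem_union_left _ hiτ, Subtype.val '' U, ?_, ⟨⟨x, hxY⟩, hxU, rfl⟩⟩
            simp only [if_neg hiσ]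
            exact Set.mem_image_of_mem _ hU
          · obtain ⟨i, hiσ, U, hU, hxU⟩ := h𝒱cover x hxY
            exact ⟨i, Finset.mem_union_right _ hiσ, U, by simp only [if_pos hiσ]; exact hU, hxU⟩
      rcases hrem with hY0 | ⟨q, hq⟩
      · -- the remainder is empty: the families 𝒱 cover all of X
        have hempty : ∀ τ : Finset ℕ, τ ∩ σ = ∅ → (τ ∪ σ) ∉ AX X := by
          intro τ hdisj
          refine hnotAX τ hdisj ⟨fun _ => ∅, fun i _ => ⟨uniformlyBdd_empty, rDisjoint_empty _⟩,
            ?_⟩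
          intro y
          exact absurd y.2 (Set.eq_empty_iff_forall_notMem.mp hY0 _)
        have hMsub : Msub (AX X) σ = ∅ := by
          ext τ
          simp only [Msub, Set.mem_setOf_eq, Set.mem_empty_iff_false, iff_false]
          rintro ⟨h1, h2, h3⟩
          exact hempty τ h3 h2
        have hσnot : σ ∉ AX X := by
          have := hempty ∅ (by simp)
          rwa [Finset.empty_union] at this
        rcases hlim with h0 | hl
        · exact Or.inr ⟨h0, hMsub, hσnot⟩
        · exact Or.inl ⟨0, hl.pos, ordLE_of_eq_empty hMsub 0⟩
      · -- the remainder Y has coasdim ≤ q.1.1 + q.1.2 < lam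
        left
        have hYsub : CoasdimLEAux (Subtype.val ⁻¹' Y : Set ↥Y) q.1.1 q.1.2 :=
          coasdimLEAux_subtype Y q.1.1 q.1.2 Y subset_rfl hq
        have huniv : (Subtype.val ⁻¹' Y : Set ↥Y) = Set.univ := by
          ext y
          simp only [Set.mem_preimage, Set.mem_univ, iff_true]
          exact y.2
        rw [huniv] at hYsub
        have hYle : CoasdimLE (Set.univ : Set ↥Y) (q.1.1 + q.1.2) :=
          ⟨q.1.1, q.1.2, q.2.2, rfl, hYsub⟩
        have hOrd : OrdLE (AX ↥Y) (q.1.1 + q.1.2) :=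
          IH (q.1.1 + q.1.2) (lt_of_lt_of_le q.2.1 le_self_add) ↥Y hYle
        refine ⟨q.1.1 + q.1.2, q.2.1, ordLE_mono _ ?_ hOrd⟩
        rintro τ ⟨hτne, hτmem, hτdisj⟩
        exact ⟨hτne, fun hex => hnotAX τ hτdisj hex hτmem⟩
    rcases hlim with h0 | hl
    · subst h0
      rw [zero_add]
      refine gen_zero n (AX X) (fun τ ht => ht.1) ?_
      intro σ h1 h2
      rcases key σ h1 h2 with ⟨β, hβ, _⟩ | ⟨_, h3, h4⟩
      · exact absurd hβ not_lt_zero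
      · exact ⟨h3, h4⟩
    · refine gen_limit lam hl n (AX X) ?_
      intro σ h1 h2
      rcases key σ h1 h2 with h | ⟨h0, _⟩
      · exact h
      · exact absurd h0 hl.pos.ne'

end Statement2Main

/-- Let `X` be a metric space. If `coasdim(X) ≤ γ` for some ordinal `γ`,
then `trasdim(X) ≤ γ`. -/
theorem statement_2 {X : Type*} [MetricSpace X] (γ : Ordinal.{0})
    (h : CoasdimLE (Set.univ : Set X) γ) : TrasdimLE X γ :=
  statement_2_main γ X h

end
end

section
/- For every integer r > 4, the asymptotic dimension function of Y_{2ω} satisfies ad_{Y_{2ω}}(r/2) ≤ r(r+3)/2 + 3^{r−1}·r + 1. -/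
open Metric Set Filter ENNReal

noncomputable section

open AsympPaper

namespace S12

/-! Auxiliary development for Statement 12. -/

def pk (p : Y2Omega) : ℕ := p.idx
def pii (p : Y2Omega) : ℕ := (p.pt : AsR).idx
def pf (p : Y2Omega) : Amb := ((p.pt : AsR).pt : Amb)

lemma dist_eq' (p q : Y2Omega) :
    dist p q = dist (pf p) (pf q) + |triHalf (pii p) - triHalf (pii q)|
      + |triHalf (pk p) - triHalf (pk q)| := rfl

lemma pk_ne_zero (p : Y2Omega) : pk p ≠ 0 := by
  intro h
  have key : ∀ x : AsR, x ∈ (if p.idx = 0 then (∅ : Set AsR) else YSub p.idx) → False := by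
    intro x hx
    rw [if_pos (show p.idx = 0 from h)] at hx
    exact Set.notMem_empty _ hx
  exact key _ p.pt.2

lemma pf_mem (p : Y2Omega) : pf p ∈ YSet (pk p) (pii p) := by
  have key : ∀ x : AsR, x ∈ (if p.idx = 0 then (∅ : Set AsR) else YSub p.idx) →
      x ∈ YSub p.idx := by
    intro x hx
    rwa [if_neg (show ¬ p.idx = 0 from pk_ne_zero p)] at hx
  exact key _ p.pt.2

lemma pf_zero (p : Y2Omega) : ∀ j, pii p ≤ j → pf p j = 0 := (pf_mem p).1

lemma pf_multk (p : Y2Omega) : ∀ j, j < pii p → IsMultiple (pk p) (pf p j) := (pf_mem p).2.1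

lemma pf_ncard (p : Y2Omega) :
    ({j | j < pii p ∧ ¬ IsMultiple (pii p) (pf p j)}).ncard ≤ pk p := (pf_mem p).2.2

/-! ### Arithmetic facts about `triHalf` -/

lemma triHalf_succ (m : ℕ) : triHalf (m + 1) = triHalf m + m := by
  unfold triHalf
  have h3 : (m + 1) * ((m + 1) - 1) = m * (m - 1) + 2 * m := by
    cases m with
    | zero => rfl
    | succ n => simp only [Nat.succ_sub_one]; ring
  rw [h3, Nat.add_mul_div_left _ _ (by norm_num : (0:ℕ) < 2)]
  push_cast
  ring

lemma triHalf_nonneg (m : ℕ) : 0 ≤ triHalf m := by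
  unfold triHalf; positivity

lemma triHalf_mono {a b : ℕ} (h : a ≤ b) : triHalf a ≤ triHalf b := by
  unfold triHalf
  exact_mod_cast Nat.div_le_div_right (Nat.mul_le_mul h (by omega))

lemma triHalf_gap {a b : ℕ} (h : a < b) : (b : ℝ) - 1 ≤ triHalf b - triHalf a := by
  obtain ⟨c, rfl⟩ : ∃ c, b = c + 1 := ⟨b - 1, by omega⟩
  rw [triHalf_succ]
  have := triHalf_mono (show a ≤ c by omega)
  push_cast
  linarith

/-! ### Index groupings -/

def gk (r k : ℕ) : ℕ := if k < r then 0 else k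
def gi (r i : ℕ) : ℕ := if i ≤ r then 0 else i

lemma lt_of_gap {r a b : ℕ} (hr : 4 < r) (hab : a < b)
    (h : |triHalf a - triHalf b| < r / 2) : b < r := by
  have hg := triHalf_gap hab
  have hm := triHalf_mono hab.le
  have habs : |triHalf a - triHalf b| = triHalf b - triHalf a := by
    rw [abs_sub_comm]; exact abs_of_nonneg (by linarith)
  rw [habs] at h
  have hR : (4:ℝ) < r := by exact_mod_cast hr
  have : (b:ℝ) < r := by linarith
  exact_mod_cast this

lemma gk_eq_of_close {r k k' : ℕ} (hr : 4 < r)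
    (h : |triHalf k - triHalf k'| < r / 2) : gk r k = gk r k' := by
  rcases Nat.lt_trichotomy k k' with h1 | h1 | h1
  · have hb := lt_of_gap hr h1 h
    unfold gk; rw [if_pos (h1.trans hb), if_pos hb]
  · rw [h1]
  · have hb := lt_of_gap hr h1 (by rwa [abs_sub_comm])
    unfold gk; rw [if_pos hb, if_pos (h1.trans hb)]

lemma gi_eq_of_close {r i i' : ℕ} (hr : 4 < r)
    (h : |triHalf i - triHalf i'| < r / 2) : gi r i = gi r i' := by
  rcases Nat.lt_trichotomy i i' with h1 | h1 | h1
  · have hb := lt_of_gap hr h1 h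
    unfold gi; rw [if_pos (h1.trans hb).le, if_pos hb.le]
  · rw [h1]
  · have hb := lt_of_gap hr h1 (by rwa [abs_sub_comm])
    unfold gi; rw [if_pos hb.le, if_pos (h1.trans hb).le]

lemma gi_bound {r a b : ℕ} (hr : 4 < r) (h : gi r a = gi r b) :
    |triHalf a - triHalf b| ≤ triHalf r := by
  unfold gi at h
  by_cases ha : a ≤ r <;> by_cases hb : b ≤ r
  · have h1 := triHalf_mono ha
    have h2 := triHalf_mono hb
    have h3 := triHalf_nonneg a
    have h4 := triHalf_nonneg b
    rw [abs_le]; constructor <;> linarith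
  · rw [if_pos ha, if_neg hb] at h; omega
  · rw [if_neg ha, if_pos hb] at h; omega
  · rw [if_neg ha, if_neg hb] at h
    rw [h, sub_self, abs_zero]; exact triHalf_nonneg r

lemma gk_bound {r a b : ℕ} (hr : 4 < r) (h : gk r a = gk r b) :
    |triHalf a - triHalf b| ≤ triHalf r := by
  unfold gk at h
  by_cases ha : a < r <;> by_cases hb : b < r
  · have h1 := triHalf_mono ha.le
    have h2 := triHalf_mono hb.le
    have h3 := triHalf_nonneg a
    have h4 := triHalf_nonneg b
    rw [abs_le]; constructor <;> linarith
  · rw [if_pos ha, if_neg hb] at h; omega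
  · rw [if_neg ha, if_pos hb] at h; omega
  · rw [if_neg ha, if_neg hb] at h
    rw [h, sub_self, abs_zero]; exact triHalf_nonneg r

/-! ### The one-dimensional interval system -/

def Ival (r t : ℕ) (n : ℤ) : Set ℝ :=
  Set.Icc ((n:ℝ) * 2 ^ t + 2 ^ t / 2 - r / 2) ((n:ℝ) * 2 ^ t + 2 ^ t + 2 ^ t / 2 + r / 2)

def wsel (t : ℕ) (x : ℝ) : ℤ := ⌊(x - 2 ^ t / 2) / 2 ^ t⌋

lemma wsel_le (t : ℕ) (x : ℝ) : (wsel t x : ℝ) * 2 ^ t + 2 ^ t / 2 ≤ x := by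
  have hT : (0:ℝ) < 2 ^ t := by positivity
  have h := Int.floor_le ((x - 2 ^ t / 2) / 2 ^ t)
  rw [le_div_iff₀ hT] at h
  unfold wsel
  linarith

lemma lt_wsel (t : ℕ) (x : ℝ) : x < (wsel t x : ℝ) * 2 ^ t + 2 ^ t + 2 ^ t / 2 := by
  have hT : (0:ℝ) < 2 ^ t := by positivity
  have h := Int.lt_floor_add_one ((x - 2 ^ t / 2) / 2 ^ t)
  rw [div_lt_iff₀ hT] at h
  unfold wsel
  nlinarith

lemma mem_Ival_of_close {r t : ℕ} (hr : 0 < r) {x y : ℝ} (h : |y - x| < r / 2) :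
    y ∈ Ival r t (wsel t x) := by
  have h1 := wsel_le t x
  have h2 := lt_wsel t x
  obtain ⟨ha, hb⟩ := abs_lt.mp h
  constructor <;> linarith

lemma mem_Ival_self {r t : ℕ} (hr : 0 < r) (x : ℝ) : x ∈ Ival r t (wsel t x) := by
  apply mem_Ival_of_close hr
  rw [sub_self, abs_zero]
  have : (0:ℝ) < r := by exact_mod_cast hr
  linarith

def nlo (r t : ℕ) (x : ℝ) : ℤ := ⌈(x - 3 * 2 ^ t / 2 - r / 2) / 2 ^ t⌉

lemma Ival_opts {r t : ℕ} {x : ℝ} {n : ℤ} (hrt : (r:ℝ) < 2 ^ t) (hx : x ∈ Ival r t n) :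
    n = nlo r t x ∨ n = nlo r t x + 1 := by
  obtain ⟨hlo, hhi⟩ := hx
  have hT : (0:ℝ) < 2 ^ t := by positivity
  have h1 : nlo r t x ≤ n := by
    apply Int.ceil_le.mpr
    rw [div_le_iff₀ hT]
    push_cast
    linarith
  have hc : (x - 3 * 2 ^ t / 2 - r / 2) / 2 ^ t ≤ (nlo r t x : ℝ) := Int.le_ceil _
  rw [div_le_iff₀ hT] at hc
  have h2 : (n:ℝ) * 2 ^ t < ((nlo r t x : ℝ) + 2) * 2 ^ t := by nlinarith
  have h3 : (n:ℝ) < (nlo r t x : ℝ) + 2 := lt_of_mul_lt_mul_right h2 hT.le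
  have h4 : n < nlo r t x + 2 := by exact_mod_cast h3
  omega

lemma Ival_unique {r t : ℕ} {x : ℝ} {n n' : ℤ} (hrt : (r:ℝ) < 2 ^ t) (hr : 0 < r)
    (hx : IsMultiple t x) (h1 : x ∈ Ival r t n) (h2 : x ∈ Ival r t n') : n = n' := by
  obtain ⟨m, rfl⟩ := hx
  have hT : (0:ℝ) < 2 ^ t := by positivity
  have hr' : (0:ℝ) < r := by exact_mod_cast hr
  have key : ∀ nn : ℤ, ((m:ℝ) * 2 ^ t) ∈ Ival r t nn → nn = m - 1 := by
    rintro nn ⟨hlo, hhi⟩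
    have e1 : (nn:ℝ) * 2 ^ t < (m:ℝ) * 2 ^ t := by linarith
    have e2 : (m:ℝ) * 2 ^ t < ((nn:ℝ) + 2) * 2 ^ t := by nlinarith
    have e1' : (nn:ℝ) < m := lt_of_mul_lt_mul_right e1 hT.le
    have e2' : (m:ℝ) < (nn:ℝ) + 2 := lt_of_mul_lt_mul_right e2 hT.le
    have f1 : nn < m := by exact_mod_cast e1'
    have f2 : m < nn + 2 := by exact_mod_cast e2'
    omega
  rw [key n h1, key n' h2]

lemma IsMultiple.mono' {a b : ℕ} {x : ℝ} (h : a ≤ b) (hx : IsMultiple b x) :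
    IsMultiple a x := by
  obtain ⟨m, rfl⟩ := hx
  refine ⟨m * 2 ^ (b - a), ?_⟩
  push_cast
  have he : b - a + a = b := by omega
  rw [mul_assoc, ← pow_add, he]

/-! ### The cover -/

def USet (r t : ℕ) (κ ι : ℕ) (w : ℕ → ℤ) : Set Y2Omega :=
  {p | gk r (pk p) = κ ∧ gi r (pii p) = ι ∧ ∀ j, pf p j ∈ Ival r t (w j)}

def Fam (r t : ℕ) : Set (Set Y2Omega) := {U | ∃ κ ι w, U = USet r t κ ι w}

lemma ball_subset_USet {r t : ℕ} (hr : 4 < r) (p : Y2Omega) :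
    Metric.ball p ((r:ℝ) / 2) ⊆
      USet r t (gk r (pk p)) (gi r (pii p)) (fun j => wsel t (pf p j)) := by
  intro q hq
  rw [Metric.mem_ball, dist_eq'] at hq
  have hd0 : (0:ℝ) ≤ dist (pf q) (pf p) := dist_nonneg
  have hi0 : (0:ℝ) ≤ |triHalf (pii q) - triHalf (pii p)| := abs_nonneg _
  have hk0 : (0:ℝ) ≤ |triHalf (pk q) - triHalf (pk p)| := abs_nonneg _
  refine ⟨gk_eq_of_close hr (by linarith), gi_eq_of_close hr (by linarith), fun j => ?_⟩
  have hj : |pf q j - pf p j| ≤ dist (pf q) (pf p) := by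
    have h := BoundedContinuousFunction.dist_coe_le_dist (f := pf q) (g := pf p) j
    rwa [Real.dist_eq] at h
  exact mem_Ival_of_close (by omega) (by linarith)

lemma covers_Fam {r t : ℕ} (hr : 4 < r) : Covers (Fam r t) := by
  intro p
  refine ⟨_, ⟨gk r (pk p), gi r (pii p), fun j => wsel t (pf p j), rfl⟩, ?_⟩
  apply ball_subset_USet hr p
  apply Metric.mem_ball_self
  have : (0:ℝ) < r := by exact_mod_cast Nat.zero_lt_of_lt hr
  linarith

lemma bdd_Fam {r t : ℕ} (hr : 4 < r) (ht2 : (2:ℝ) ^ t ≤ 2 * r) : UniformlyBdd (Fam r t) := by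
  refine ⟨3 * r + 2 * triHalf r, ?_⟩
  rintro U ⟨κ, ι, w, rfl⟩ x hx y hy
  obtain ⟨hxk, hxi, hxw⟩ := hx
  obtain ⟨hyk, hyi, hyw⟩ := hy
  rw [dist_eq']
  have hr' : (0:ℝ) < r := by exact_mod_cast Nat.zero_lt_of_lt hr
  have h1 : dist (pf x) (pf y) ≤ 2 ^ t + r := by
    refine (BoundedContinuousFunction.dist_le (by positivity)).mpr fun j => ?_
    obtain ⟨ha1, ha2⟩ := hxw j
    obtain ⟨hb1, hb2⟩ := hyw j
    rw [Real.dist_eq, abs_le]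
    constructor <;> linarith
  have h2 : |triHalf (pii x) - triHalf (pii y)| ≤ triHalf r :=
    gi_bound hr (hxi.trans hyi.symm)
  have h3 : |triHalf (pk x) - triHalf (pk y)| ≤ triHalf r :=
    gk_bound hr (hxk.trans hyk.symm)
  linarith

lemma card_le_pow {r t : ℕ} (hr : 4 < r) (hrt : (r:ℝ) < 2 ^ t) (htr : t ≤ r + 1)
    (T : Finset (Set Y2Omega)) (hTsub : ↑T ⊆ Fam r t)
    (hTne : (⋂₀ (T : Set (Set Y2Omega))).Nonempty) : T.card ≤ 2 ^ r := by
  classical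
  obtain ⟨p, hp⟩ := hTne
  have hpU : ∀ U ∈ T, p ∈ U := fun U hU => hp U hU
  set B : Finset ℕ :=
    (Finset.range (pii p)).filter (fun j => ¬ IsMultiple t (pf p j)) with hB
  have hr0 : 0 < r := by omega
  have hBcard : B.card ≤ r := by
    by_cases hir : pii p ≤ r
    · calc B.card ≤ (Finset.range (pii p)).card := Finset.card_filter_le _ _
        _ = pii p := Finset.card_range _
        _ ≤ r := hir
    · push_neg at hir
      by_cases hkt : t ≤ pk p
      · have hBe : B = ∅ := by
          ext j
          simp only [hB, Finset.mem_filter, Finset.mem_range, Finset.notMem_empty,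
            iff_false, not_and, not_not]
          intro hj
          exact IsMultiple.mono' hkt (pf_multk p j hj)
        rw [hBe]
        simp
      · push_neg at hkt
        have hti : t ≤ pii p := by omega
        have hsub : (B : Set ℕ) ⊆ {j | j < pii p ∧ ¬ IsMultiple (pii p) (pf p j)} := by
          intro j hj
          rw [Finset.mem_coe, hB, Finset.mem_filter, Finset.mem_range] at hj
          exact ⟨hj.1, fun hm => hj.2 (IsMultiple.mono' hti hm)⟩
        have hfin : {j | j < pii p ∧ ¬ IsMultiple (pii p) (pf p j)}.Finite :=
          (Set.finite_Iio (pii p)).subset fun j hj => hj.1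
        calc B.card = (B : Set ℕ).ncard := (Set.ncard_coe_finset B).symm
          _ ≤ _ := Set.ncard_le_ncard hsub hfin
          _ ≤ pk p := pf_ncard p
          _ ≤ r := by omega
  -- surjection from bit-vectors on B onto T
  have hsurj : Set.SurjOn
      (fun b : (↥B → Bool) =>
        USet r t (gk r (pk p)) (gi r (pii p))
          (fun j => if hj : j ∈ B then
              (if b ⟨j, hj⟩ then nlo r t (pf p j) + 1 else nlo r t (pf p j))
            else wsel t (pf p j)))
      (Finset.univ : Finset (↥B → Bool)) (T : Set (Set Y2Omega)) := by
    intro U hU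
    obtain ⟨κ, ι, w, rfl⟩ := hTsub hU
    obtain ⟨hκ, hι, hw⟩ := hpU _ hU
    refine ⟨fun j => decide (w j.1 = nlo r t (pf p j.1) + 1),
      Finset.mem_coe.mpr (Finset.mem_univ _), ?_⟩
    have hwfun : (fun j => if hj : j ∈ B then
        (if decide (w j = nlo r t (pf p j) + 1) then nlo r t (pf p j) + 1 else nlo r t (pf p j))
        else wsel t (pf p j)) = w := by
      funext j
      by_cases hj : j ∈ B
      · rw [dif_pos hj]
        by_cases hd : w j = nlo r t (pf p j) + 1
        · simp [hd]
        · have := (Ival_opts hrt (hw j)).resolve_right hd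
          simp [hd, this]
      · rw [dif_neg hj]
        have hmul : IsMultiple t (pf p j) := by
          rw [hB, Finset.mem_filter, Finset.mem_range, not_and, not_not] at hj
          by_cases hji : j < pii p
          · exact hj hji
          · push_neg at hji
            rw [pf_zero p j hji]
            exact ⟨0, by simp⟩
        exact Ival_unique hrt hr0 hmul (mem_Ival_self hr0 _) (hw j)
    simp only
    rw [hκ, hι, hwfun]
  have hcard := Finset.card_le_card_of_surjOn _ hsurj
  calc T.card ≤ (Finset.univ : Finset (↥B → Bool)).card := hcard
    _ = 2 ^ B.card := by rw [Finset.card_univ, Fintype.card_fun]; simp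
    _ ≤ 2 ^ r := Nat.pow_le_pow_right (by norm_num) hBcard

lemma covMult_le_pow {r t : ℕ} (hr : 4 < r) (hrt : (r:ℝ) < 2 ^ t) (htr : t ≤ r + 1) :
    covMult (Fam r t) ≤ ((2 ^ r : ℕ) : ℕ∞) := by
  apply sSup_le
  rintro m ⟨T, hT1, hT2, rfl⟩
  exact Nat.cast_le.mpr (card_le_pow hr hrt htr T hT1 hT2)

lemma leb_Fam {r t : ℕ} (hr : 4 < r) :
    ENNReal.ofReal ((r:ℝ) / 2) ≤ lebesgueNum (Fam r t) := by
  refine le_iInf fun p => ?_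
  apply le_sSup
  refine ⟨(r:ℝ) / 2, ?_, rfl, _,
    ⟨gk r (pk p), gi r (pii p), fun j => wsel t (pf p j), rfl⟩, ball_subset_USet hr p⟩
  have : (0:ℝ) < r := by exact_mod_cast Nat.zero_lt_of_lt hr
  linarith

lemma two_pow_le_three_pow {n : ℕ} (hn : 4 ≤ n) : 2 ^ n ≤ 3 ^ (n - 1) := by
  induction n with
  | zero => omega
  | succ m ih =>
    rcases Nat.lt_or_ge m 4 with h | h
    · have hm3 : m = 3 := by omega
      subst hm3
      norm_num
    · have h1 := ih h
      calc 2 ^ (m + 1) = 2 * 2 ^ m := by ring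
        _ ≤ 2 * 3 ^ (m - 1) := Nat.mul_le_mul (le_refl 2) h1
        _ ≤ 3 * 3 ^ (m - 1) := Nat.mul_le_mul (by norm_num) (le_refl _)
        _ = 3 ^ (m + 1 - 1) := by
            rw [Nat.add_sub_cancel]
            conv_rhs => rw [show m = (m - 1) + 1 by omega]
            ring

end S12


/-- For every integer `r > 4`,
`ad_{Y_{2ω}}(r/2) ≤ r(r+3)/2 + 3^(r-1)·r + 1`. -/
theorem statement_12 (r : ℕ) (hr : 4 < r) :
    adim Y2Omega ((r : ℝ) / 2) ≤ ((r * (r + 3) / 2 + 3 ^ (r - 1) * r + 1 : ℕ) : ℕ∞) := by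
  have hr0 : r ≠ 0 := by omega
  set t := Nat.log 2 r + 1 with htdef
  have h1 : r < 2 ^ t := Nat.lt_pow_succ_log_self (by norm_num) r
  have hrt : (r : ℝ) < 2 ^ t := by exact_mod_cast h1
  have hlog : 2 ^ (Nat.log 2 r) ≤ r := Nat.pow_log_le_self 2 hr0
  have hlt : Nat.log 2 r < 2 ^ (Nat.log 2 r) := Nat.lt_two_pow_self
  have htr : t ≤ r + 1 := by omega
  have ht2 : (2 : ℝ) ^ t ≤ 2 * r := by
    have h2 : 2 ^ t ≤ 2 * r := by
      rw [htdef, pow_succ]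
      omega
    exact_mod_cast h2
  have hnum : 2 ^ r ≤ r * (r + 3) / 2 + 3 ^ (r - 1) * r + 1 + 1 := by
    have h23 : 2 ^ r ≤ 3 ^ (r - 1) := S12.two_pow_le_three_pow (by omega)
    have h3 : 3 ^ (r - 1) * 1 ≤ 3 ^ (r - 1) * r := Nat.mul_le_mul (le_refl _) (by omega)
    omega
  have hmem : covMult (S12.Fam r t) ∈ {m : ℕ∞ | ∃ 𝒰 : Set (Set Y2Omega), UniformlyBdd 𝒰 ∧
      Covers 𝒰 ∧ ENNReal.ofReal ((r : ℝ) / 2) ≤ lebesgueNum 𝒰 ∧ m = covMult 𝒰} :=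
    ⟨S12.Fam r t, S12.bdd_Fam hr ht2, S12.covers_Fam hr, S12.leb_Fam hr, rfl⟩
  unfold adim
  rw [tsub_le_iff_right]
  refine le_trans (sInf_le hmem) ?_
  refine le_trans (S12.covMult_le_pow hr hrt htr) ?_
  exact_mod_cast hnum

end
end
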